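/- Let D ⊂ ℂⁿ be a bounded domain, Y ⊂ ℂ^m a nonempty open set, and F : Y × D → D a holomorphic map such that for every y ∈ Y the map f_y = F(y,·) : D → D has image with compact closure contained in D. Then the map τ_F : Y → D, defined by letting τ_F(y) be the unique fixed point of f_y, is holomorphic. -/

import Mathlib

open Metric Set Function Filter Asymptotics
open scoped Topology

variable {E E' : Type*} [NormedAddCommGroup E] [NormedSpace ℂ E]
  [NormedAddCommGroup E'] [NormedSpace ℂ E']

/-- Several-variable Schwarz (distance form) via restriction to complex lines. -/
lemma schwarz_dist {u : E → E'} {c : E} {r R : ℝ} (hr : 0 < r)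
    (hd : DifferentiableOn ℂ u (ball c r))
    (hmaps : MapsTo u (ball c r) (ball (u c) R))
    {w : E} (hw : w ∈ ball c r) :
    ‖u w - u c‖ ≤ R / r * ‖w - c‖ := by
  rcases eq_or_ne w c with rfl | hne
  · simp
  have hv0 : ‖w - c‖ ≠ 0 := by simpa [sub_eq_zero] using hne
  have hvpos : (0:ℝ) < ‖w - c‖ := lt_of_le_of_ne (norm_nonneg _) (Ne.symm hv0)
  have hvr : ‖w - c‖ < r := by simpa [mem_ball, dist_eq_norm] using hw
  set v := w - c with hv
  set ρ := r / ‖v‖ with hρ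
  have hρpos : 0 < ρ := div_pos hr hvpos
  have hline : ∀ l : ℂ, l ∈ ball (0:ℂ) ρ → c + l • v ∈ ball c r := by
    intro l hl
    have : ‖l‖ < ρ := by simpa [mem_ball, dist_eq_norm] using hl
    have : ‖l‖ * ‖v‖ < r := by
      rw [hρ, lt_div_iff₀ hvpos] at this; exact this
    simpa [mem_ball, dist_eq_norm, norm_smul] using this
  set φ : ℂ → E' := fun l => u (c + l • v) with hφ
  have hφd : DifferentiableOn ℂ φ (ball (0:ℂ) ρ) := by
    exact hd.comp (((differentiable_id).smul_const v).const_add c).differentiableOn hline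
  have hφ0 : φ 0 = u c := by simp [hφ]
  have hφmaps : MapsTo φ (ball (0:ℂ) ρ) (ball (φ 0) R) := by
    intro l hl
    rw [hφ0]
    exact hmaps (hline l hl)
  have h1 : (1:ℂ) ∈ ball (0:ℂ) ρ := by
    simp only [mem_ball, dist_zero_right, norm_one]
    rw [hρ, lt_div_iff₀ hvpos, one_mul]; exact hvr
  have := Complex.dist_le_div_mul_dist_of_mapsTo_ball hφd (hφmaps.mono_right ball_subset_closedBall) h1
  have hφ1 : φ 1 = u w := by simp [hφ, hv]
  rw [hφ1, hφ0] at this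
  simp only [dist_eq_norm, sub_zero, norm_one, mul_one] at this
  calc ‖u w - u c‖ ≤ R / ρ := this
    _ = R / r * ‖v‖ := by rw [hρ, div_div_eq_mul_div, div_mul_eq_mul_div]
    _ = R / r * ‖w - c‖ := by rw [hv]

/-- Several-variable Schwarz (derivative form). -/
lemma schwarz_fderiv {u : E → E'} {c : E} {r R : ℝ} (hr : 0 < r) (hR : 0 ≤ R)
    (hd : DifferentiableOn ℂ u (ball c r))
    (hmaps : MapsTo u (ball c r) (ball (u c) R)) :
    ‖fderiv ℂ u c‖ ≤ R / r := by
  have hc : DifferentiableAt ℂ u c :=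
    hd.differentiableAt (isOpen_ball.mem_nhds (mem_ball_self hr))
  refine ContinuousLinearMap.opNorm_le_bound _ (div_nonneg hR hr.le) fun v => ?_
  rcases eq_or_ne v 0 with rfl | hv
  · simp
  have hvpos : (0:ℝ) < ‖v‖ := norm_pos_iff.2 hv
  set ρ := r / ‖v‖ with hρ
  have hρpos : 0 < ρ := div_pos hr hvpos
  have hline : ∀ l : ℂ, l ∈ ball (0:ℂ) ρ → c + l • v ∈ ball c r := by
    intro l hl
    have : ‖l‖ < ρ := by simpa [mem_ball, dist_eq_norm] using hl
    have : ‖l‖ * ‖v‖ < r := by rw [hρ, lt_div_iff₀ hvpos] at this; exact this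
    simpa [mem_ball, dist_eq_norm, norm_smul] using this
  set φ : ℂ → E' := fun l => u (c + l • v) with hφ
  have hφd : DifferentiableOn ℂ φ (ball (0:ℂ) ρ) := by
    exact hd.comp (((differentiable_id).smul_const v).const_add c).differentiableOn hline
  have hφ0 : φ 0 = u c := by simp [hφ]
  have hφmaps : MapsTo φ (ball (0:ℂ) ρ) (ball (φ 0) R) := by
    intro l hl; rw [hφ0]; exact hmaps (hline l hl)
  have hder : HasDerivAt φ (fderiv ℂ u c v) 0 := by
    have h₁ : HasDerivAt (fun l : ℂ => c + l • v) v 0 := by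
      simpa using ((hasDerivAt_id (0:ℂ)).smul_const v).const_add c
    have h₂ : HasFDerivAt u (fderiv ℂ u c) ((fun l : ℂ => c + l • v) 0) := by
      simpa using hc.hasFDerivAt
    exact h₂.comp_hasDerivAt 0 h₁
  have hb := Complex.norm_deriv_le_div_of_mapsTo_ball hφd (hφmaps.mono_right ball_subset_closedBall) hρpos
  rw [hder.deriv] at hb
  calc ‖fderiv ℂ u c v‖ ≤ R / ρ := hb
    _ = R / r * ‖v‖ := by rw [hρ, div_div_eq_mul_div, div_mul_eq_mul_div]
variable {f : E → E} {D : Set E} {p : E}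

lemma iter_diffOn (hf : DifferentiableOn ℂ f D) (hmaps : MapsTo f D D) :
    ∀ k, DifferentiableOn ℂ (f^[k]) D := by
  intro k
  induction k with
  | zero => simpa using differentiableOn_id
  | succ k ih =>
    rw [Function.iterate_succ]
    exact ih.comp hf hmaps

lemma hasFDerivAt_iterate_fixed (hDopen : IsOpen D)
    (hf : DifferentiableOn ℂ f D) (hp : p ∈ D) (hfix : f p = p) :
    ∀ k, HasFDerivAt (f^[k]) ((fderiv ℂ f p) ^ k) p := by
  have hfp : HasFDerivAt f (fderiv ℂ f p) p :=
    (hf.differentiableAt (hDopen.mem_nhds hp)).hasFDerivAt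
  intro k
  induction k with
  | zero =>
    simpa [Function.iterate_zero, pow_zero, ContinuousLinearMap.one_def] using
      (hasFDerivAt_id p)
  | succ k ih =>
    rw [Function.iterate_succ, pow_succ]
    have hik : HasFDerivAt (f^[k]) ((fderiv ℂ f p) ^ k) (f p) := by rwa [hfix]
    exact hik.comp p hfp

/-- Key decay lemma: at a fixed point of a holomorphic self-map of a bounded
domain with relatively compact image, powers of the derivative tend to zero. -/
lemma fderiv_pow_tendsto_zero (hDopen : IsOpen D) (hDbdd : Bornology.IsBounded D)
    (hf : DifferentiableOn ℂ f D)
    (hK : IsCompact (closure (f '' D))) (hsub : closure (f '' D) ⊆ D)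
    (hp : p ∈ D) (hfix : f p = p) :
    Tendsto (fun k => ‖(fderiv ℂ f p) ^ k‖) atTop (𝓝 0) := by
  obtain ⟨r, hr0, hrD⟩ := (Metric.isOpen_iff.1 hDopen) p hp
  obtain ⟨R, hR0, hRD⟩ := hDbdd.subset_ball_lt 0 p
  obtain ⟨δ, hδ0, hδ⟩ := hK.exists_thickening_subset_open hDopen hsub
  set ε := δ / (2 * R) with hε
  have hεpos : 0 < ε := div_pos hδ0 (by linarith)
  set cc : ℂ := ((1 + ε : ℝ) : ℂ) with hcc
  have hccnorm : ‖cc‖ = 1 + ε := by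
    rw [hcc, Complex.norm_real, Real.norm_eq_abs, abs_of_pos]; linarith
  set g : E → E := fun z => p + cc • (f z - p) with hg
  have hfmemK : ∀ z ∈ D, f z ∈ closure (f '' D) := fun z hz =>
    subset_closure (mem_image_of_mem f hz)
  have hgmaps : MapsTo g D D := by
    intro z hz
    apply hδ
    rw [Metric.mem_thickening_iff]
    refine ⟨f z, hfmemK z hz, ?_⟩
    have h1 : g z - f z = ((ε:ℝ):ℂ) • (f z - p) := by
      rw [hg]
      have : cc = 1 + ((ε:ℝ):ℂ) := by rw [hcc]; push_cast; ring
      rw [this]; simp [add_smul, one_smul]; abel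
    have h2 : ‖f z - p‖ < R := by
      have := hRD (hsub (hfmemK z hz))
      simpa [mem_ball, dist_eq_norm] using this
    have : dist (g z) (f z) = ε * ‖f z - p‖ := by
      rw [dist_eq_norm, h1, norm_smul, Complex.norm_real, Real.norm_eq_abs, abs_of_pos hεpos]
    rw [this]
    calc ε * ‖f z - p‖ < ε * R := by
          exact mul_lt_mul_of_pos_left h2 hεpos
      _ = δ / 2 := by rw [hε]; field_simp
      _ < δ := by linarith
  have hgdiff : DifferentiableOn ℂ g D :=
    (((hf.sub_const p).const_smul cc).const_add p)
  have hgfix : g p = p := by simp [hg, hfix]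
  have hgderiv : HasFDerivAt g (cc • fderiv ℂ f p) p := by
    have hfp : HasFDerivAt f (fderiv ℂ f p) p :=
      (hf.differentiableAt (hDopen.mem_nhds hp)).hasFDerivAt
    exact ((hfp.sub_const p).const_smul cc).const_add p
  have hbound : ∀ k, ‖(fderiv ℂ f p) ^ k‖ ≤ R / r * (1 / (1 + ε)) ^ k := by
    intro k
    have hgk : HasFDerivAt (g^[k]) ((fderiv ℂ g p) ^ k) p :=
      hasFDerivAt_iterate_fixed hDopen hgdiff hp hgfix k
    rw [hgderiv.fderiv] at hgk
    have hgkp : g^[k] p = p := Function.iterate_fixed hgfix k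
    have hmapsk : MapsTo (g^[k]) D D := hgmaps.iterate k
    have hdk : DifferentiableOn ℂ (g^[k]) (ball p r) :=
      (iter_diffOn hgdiff hgmaps k).mono hrD
    have hmk : MapsTo (g^[k]) (ball p r) (ball (g^[k] p) R) := by
      rw [hgkp]
      intro z hz
      exact hRD (hmapsk (hrD hz))
    have := schwarz_fderiv hr0 (by linarith) hdk hmk
    have hfd : fderiv ℂ (g^[k]) p = (cc • fderiv ℂ f p) ^ k := hgk.fderiv
    rw [hfd, smul_pow, norm_smul, norm_pow, hccnorm] at this
    have h1ε : (0:ℝ) < (1 + ε) ^ k := by positivity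
    rw [div_pow, one_pow, mul_comm (R / r), one_div, inv_mul_eq_div, le_div_iff₀ h1ε,
      mul_comm]
    exact this
  have htends : Tendsto (fun k => R / r * (1 / (1 + ε)) ^ k) atTop (𝓝 0) := by
    have h01 : (0:ℝ) ≤ 1 / (1 + ε) := by positivity
    have h11 : 1 / (1 + ε) < 1 := by
      rw [div_lt_one (by linarith)]; linarith
    have := tendsto_pow_atTop_nhds_zero_of_lt_one h01 h11
    simpa using this.const_mul (R / r)
  exact squeeze_zero (fun k => norm_nonneg _) hbound htends
/-- Uniqueness of the fixed point (Ritt's theorem): a holomorphic self-map of a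
bounded connected domain with relatively compact image has at most one fixed point. -/
lemma fixed_point_unique (hDopen : IsOpen D) (hDconn : IsConnected D)
    (hDbdd : Bornology.IsBounded D) (hf : DifferentiableOn ℂ f D)
    (hK : IsCompact (closure (f '' D))) (hsub : closure (f '' D) ⊆ D)
    (hp : p ∈ D) (hfix : f p = p) {q : E} (hq : q ∈ D) (hqfix : f q = q) :
    q = p := by
  have hmaps : MapsTo f D D := fun z hz =>
    hsub (subset_closure (mem_image_of_mem f hz))
  obtain ⟨r, hr0, hrD⟩ := (Metric.isOpen_iff.1 hDopen) p hp
  obtain ⟨R, hR0, hRD⟩ := hDbdd.subset_ball_lt 0 p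
  -- pick k₀ with small derivative power
  have hdecay := fderiv_pow_tendsto_zero hDopen hDbdd hf hK hsub hp hfix
  obtain ⟨k₀, hk₀⟩ := (hdecay.eventually (gt_mem_nhds (by norm_num : (0:ℝ) < 1/4))).exists
  set A' := (fderiv ℂ f p) ^ k₀ with hA'
  set h : E → E := f^[k₀] with hh
  have hhd : DifferentiableOn ℂ h D := iter_diffOn hf hmaps k₀
  have hhmaps : MapsTo h D D := hmaps.iterate k₀
  have hhp : h p = p := Function.iterate_fixed hfix k₀
  have hhderiv : HasFDerivAt h A' p := hasFDerivAt_iterate_fixed hDopen hf hp hfix k₀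
  -- local attraction radius
  have hlo := hhderiv.isLittleO.def (by norm_num : (0:ℝ) < 1/4)
  rw [Metric.eventually_nhds_iff] at hlo
  obtain ⟨ε₀, hε₀, hlo⟩ := hlo
  set ε₁ := min ε₀ r with hε₁
  have hε₁pos : 0 < ε₁ := lt_min hε₀ hr0
  have hcontract : ∀ z ∈ ball p ε₁, h z ∈ ball p ε₁ ∧ ‖h z - p‖ ≤ 1/2 * ‖z - p‖ := by
    intro z hz
    have hz' : dist z p < ε₀ := lt_of_lt_of_le (mem_ball.1 hz) (min_le_left _ _)
    have hb := hlo hz'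
    rw [hhp] at hb
    have h1 : ‖h z - p‖ ≤ ‖h z - p - A' (z - p)‖ + ‖A' (z - p)‖ := by
      have := norm_add_le (h z - p - A' (z - p)) (A' (z - p))
      simpa using this
    have h2 : ‖A' (z - p)‖ ≤ 1/4 * ‖z - p‖ := by
      calc ‖A' (z - p)‖ ≤ ‖A'‖ * ‖z - p‖ := A'.le_opNorm _
        _ ≤ 1/4 * ‖z - p‖ := by
            apply mul_le_mul_of_nonneg_right (le_of_lt hk₀) (norm_nonneg _)
    have hle : ‖h z - p‖ ≤ 1/2 * ‖z - p‖ := by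
      calc ‖h z - p‖ ≤ ‖h z - p - A' (z - p)‖ + ‖A' (z - p)‖ := h1
        _ ≤ 1/4 * ‖z - p‖ + 1/4 * ‖z - p‖ := add_le_add hb h2
        _ = 1/2 * ‖z - p‖ := by ring
    refine ⟨?_, hle⟩
    rw [mem_ball, dist_eq_norm]
    have hzp : ‖z - p‖ < ε₁ := by rwa [mem_ball, dist_eq_norm] at hz
    calc ‖h z - p‖ ≤ 1/2 * ‖z - p‖ := hle
      _ < ε₁ := by linarith
  have hattract : ∀ z ∈ ball p ε₁, Tendsto (fun k => h^[k] z) atTop (𝓝 p) := by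
    intro z hz
    have hiter : ∀ k, h^[k] z ∈ ball p ε₁ ∧ ‖h^[k] z - p‖ ≤ (1/2)^k * ‖z - p‖ := by
      intro k
      induction k with
      | zero => simpa using hz
      | succ k ih =>
        have := hcontract _ ih.1
        rw [Function.iterate_succ_apply']
        refine ⟨this.1, ?_⟩
        calc ‖h (h^[k] z) - p‖ ≤ 1/2 * ‖h^[k] z - p‖ := this.2
          _ ≤ 1/2 * ((1/2)^k * ‖z - p‖) := by linarith [ih.2]
          _ = (1/2)^(k+1) * ‖z - p‖ := by ring
    rw [tendsto_iff_dist_tendsto_zero]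
    refine squeeze_zero (g := fun k => (1/2:ℝ)^k * ‖z - p‖) (fun k => dist_nonneg)
      (fun k => ?_) ?_
    · rw [dist_eq_norm]; exact (hiter k).2
    · have := tendsto_pow_atTop_nhds_zero_of_lt_one (by norm_num : (0:ℝ) ≤ 1/2)
        (by norm_num : (1/2:ℝ) < 1)
      simpa using this.mul_const ‖z - p‖
  -- the basin of attraction
  set B : Set E := {z | z ∈ D ∧ Tendsto (fun k => h^[k] z) atTop (𝓝 p)} with hB
  have hpB : p ∈ B := ⟨hp, by simp [Function.iterate_fixed hhp]⟩
  have hBopen : IsOpen B := by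
    rw [isOpen_iff_mem_nhds]
    rintro z ⟨hzD, hzT⟩
    obtain ⟨N, hN⟩ := (hzT.eventually (isOpen_ball.mem_nhds (mem_ball_self hε₁pos))).exists
    have hcN : ContinuousAt (h^[N]) z :=
      ((iter_diffOn hhd hhmaps N).differentiableAt (hDopen.mem_nhds hzD)).continuousAt
    have hW : (h^[N]) ⁻¹' (ball p ε₁) ∈ 𝓝 z := hcN.preimage_mem_nhds (isOpen_ball.mem_nhds hN)
    filter_upwards [hW, hDopen.mem_nhds hzD] with w hw1 hw2
    refine ⟨hw2, ?_⟩
    have := hattract _ hw1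
    have heq : ∀ k, h^[k] (h^[N] w) = h^[k + N] w := fun k =>
      (Function.iterate_add_apply h k N w).symm
    rw [show (fun k => h^[k] (h^[N] w)) = fun k => h^[k + N] w from funext heq] at this
    exact (tendsto_add_atTop_iff_nat N).1 this
  have hBclosed : closure B ∩ D ⊆ B := by
    rintro z ⟨hzc, hzD⟩
    obtain ⟨rz, hrz0, hrzD⟩ := (Metric.isOpen_iff.1 hDopen) z hzD
    set C := 2 * R / rz with hC
    have hCpos : 0 < C := by positivity
    have hlip : ∀ k, ∀ w ∈ ball z rz, ‖h^[k] w - h^[k] z‖ ≤ C * ‖w - z‖ := by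
      intro k w hw
      apply schwarz_dist hrz0 ((iter_diffOn hhd hhmaps k).mono hrzD) ?_ hw
      intro x hx
      have hx1 : h^[k] x ∈ D := hhmaps.iterate k (hrzD hx)
      have hx2 : h^[k] z ∈ D := hhmaps.iterate k hzD
      rw [mem_ball]
      calc dist (h^[k] x) (h^[k] z) ≤ dist (h^[k] x) p + dist p (h^[k] z) := dist_triangle _ _ _
        _ < R + R := by
            have := hRD hx1; rw [mem_ball] at this
            have h2 := hRD hx2; rw [mem_ball] at h2
            rw [dist_comm p]; linarith
        _ = 2 * R := by ring
    refine ⟨hzD, ?_⟩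
    rw [Metric.tendsto_atTop]
    intro ε hε
    set ρ := min rz (ε / (2 * (C + 1))) with hρ
    have hρpos : 0 < ρ := lt_min hrz0 (by positivity)
    obtain ⟨w, hwB, hwd⟩ := Metric.mem_closure_iff.1 hzc ρ hρpos
    obtain ⟨N, hN⟩ := (Metric.tendsto_atTop.1 hwB.2) (ε/2) (by linarith)
    refine ⟨N, fun k hk => ?_⟩
    have hwball : w ∈ ball z rz := by
      rw [mem_ball, dist_comm]
      exact lt_of_lt_of_le hwd (min_le_left _ _)
    have hl := hlip k w hwball
    have hwz : ‖w - z‖ < ε / (2 * (C + 1)) := by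
      rw [← dist_eq_norm, dist_comm]
      exact lt_of_lt_of_le hwd (min_le_right _ _)
    calc dist (h^[k] z) p ≤ dist (h^[k] z) (h^[k] w) + dist (h^[k] w) p := dist_triangle _ _ _
      _ < C * ‖w - z‖ + ε/2 := by
          rw [dist_comm, dist_eq_norm]
          exact add_lt_add_of_le_of_lt hl (hN k hk)
      _ < C * (ε / (2 * (C + 1))) + ε/2 := by
          apply add_lt_add_left
          exact mul_lt_mul_of_pos_left hwz hCpos
      _ ≤ ε/2 + ε/2 := by
          apply add_le_add_left
          rw [mul_div_assoc']
          rw [div_le_div_iff₀ (by positivity) (by norm_num)]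
          ring_nf; nlinarith
      _ = ε := by ring
  -- connectedness: the basin is everything
  have hqB : q ∈ B := by
    by_cases hqc : q ∈ closure B
    · exact hBclosed ⟨hqc, hq⟩
    exfalso
    have hVopen : IsOpen (closure B)ᶜ := isClosed_closure.isOpen_compl
    have hcover : D ⊆ B ∪ (closure B)ᶜ := by
      intro d hd
      by_cases hdc : d ∈ closure B
      · exact Or.inl (hBclosed ⟨hdc, hd⟩)
      · exact Or.inr hdc
    obtain ⟨x, _, hxB, hxV⟩ := hDconn.isPreconnected B (closure B)ᶜ hBopen hVopen hcover
      ⟨p, hp, hpB⟩ ⟨q, hq, hqc⟩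
    exact hxV (subset_closure hxB)
  have hqfix' : ∀ k, h^[k] q = q :=
    Function.iterate_fixed (Function.iterate_fixed hqfix k₀)
  have : Tendsto (fun k => h^[k] q) atTop (𝓝 q) := by
    rw [show (fun k => h^[k] q) = fun _ => q from funext hqfix']
    exact tendsto_const_nhds
  exact tendsto_nhds_unique this hqB.2

/-- Theorem 2.3 (bounded-domain case): if `F : Y × D → D` is holomorphic and each
slice `f_y = F(y,·)` has relatively compact image in `D`, then the map `τ_F`
assigning to `y` the unique fixed point of `f_y` is holomorphic on `Y`. -/
theorem heins_map_holomorphic_family (n m : ℕ)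
    (D : Set (Fin n → ℂ)) (hDopen : IsOpen D) (hDconn : IsConnected D)
    (hDbdd : Bornology.IsBounded D)
    (Y : Set (Fin m → ℂ)) (hYopen : IsOpen Y) (hYne : Y.Nonempty)
    (F : (Fin m → ℂ) × (Fin n → ℂ) → (Fin n → ℂ))
    (hF : DifferentiableOn ℂ F (Y ×ˢ D))
    (hFmaps : ∀ y ∈ Y, ∀ z ∈ D, F (y, z) ∈ D)
    (hFcpt : ∀ y ∈ Y, IsCompact (closure ((fun z => F (y, z)) '' D)))
    (hFsub : ∀ y ∈ Y, closure ((fun z => F (y, z)) '' D) ⊆ D)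
    (τ : (Fin m → ℂ) → (Fin n → ℂ))
    (hτmem : ∀ y ∈ Y, τ y ∈ D) (hτfix : ∀ y ∈ Y, F (y, τ y) = τ y) :
    DifferentiableOn ℂ τ Y := by
  intro y₀ hy₀
  set p := τ y₀ with hpdef
  have hpD : p ∈ D := hτmem y₀ hy₀
  have hpfix : F (y₀, p) = p := hτfix y₀ hy₀
  have hYD : IsOpen (Y ×ˢ D) := hYopen.prod hDopen
  have hx₀ : (y₀, p) ∈ Y ×ˢ D := ⟨hy₀, hpD⟩
  have hFd : DifferentiableAt ℂ F (y₀, p) := hF.differentiableAt (hYD.mem_nhds hx₀)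
  set L := fderiv ℂ F (y₀, p) with hLdef
  have hL : HasFDerivAt F L (y₀, p) := hFd.hasFDerivAt
  set f₀ : (Fin n → ℂ) → (Fin n → ℂ) := fun z => F (y₀, z) with hf₀
  have hslice : ∀ y ∈ Y, DifferentiableOn ℂ (fun z => F (y, z)) D := by
    intro y hy
    have hpm : DifferentiableOn ℂ (fun z : Fin n → ℂ => ((y, z) : _ × _)) D :=
      ((differentiable_const y).prodMk differentiable_id).differentiableOn
    exact hF.comp hpm (fun z hz => ⟨hy, hz⟩)
  have hf₀d : DifferentiableOn ℂ f₀ D := hslice y₀ hy₀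
  set A := L.comp (ContinuousLinearMap.inr ℂ (Fin m → ℂ) (Fin n → ℂ)) with hAdef
  have hA : HasFDerivAt f₀ A p := hL.comp p (hasFDerivAt_prodMk_right y₀ p)
  have hK₀ : IsCompact (closure (f₀ '' D)) := hFcpt y₀ hy₀
  have hsub₀ : closure (f₀ '' D) ⊆ D := hFsub y₀ hy₀
  have hf₀fix : f₀ p = p := hpfix
  -- decay of derivative powers and injectivity of 1 - A
  have hdecay : Tendsto (fun k => ‖A ^ k‖) atTop (𝓝 0) := by
    have := fderiv_pow_tendsto_zero hDopen hDbdd hf₀d hK₀ hsub₀ hpD hf₀fix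
    rwa [hA.fderiv] at this
  have hinj : ∀ v : Fin n → ℂ, v - A v = 0 → v = 0 := by
    intro v hv
    have hAv : A v = v := by
      have := sub_eq_zero.1 hv; exact this.symm
    have hiter : ∀ k, (A ^ k) v = v := by
      intro k
      induction k with
      | zero => simp
      | succ k ih => rw [pow_succ, ContinuousLinearMap.mul_apply, hAv, ih]
    have hle : ∀ k, ‖v‖ ≤ ‖A ^ k‖ * ‖v‖ := by
      intro k
      conv_lhs => rw [← hiter k]
      exact (A ^ k).le_opNorm v
    have hlim : Tendsto (fun k => ‖A ^ k‖ * ‖v‖) atTop (𝓝 (0 * ‖v‖)) :=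
      hdecay.mul_const ‖v‖
    rw [zero_mul] at hlim
    have : ‖v‖ ≤ 0 := ge_of_tendsto' hlim hle
    simpa using le_antisymm this (norm_nonneg v)
  set T : (Fin n → ℂ) →L[ℂ] (Fin n → ℂ) := ContinuousLinearMap.id ℂ _ - A with hT
  have hTapp : ∀ v, T v = v - A v := fun v => rfl
  have hTinj : Function.Injective T := by
    intro a b hab
    have h0 : T (a - b) = 0 := by rw [map_sub, hab, sub_self]
    have : (a - b) - A (a - b) = 0 := by rw [← hTapp]; exact h0
    have := hinj _ this
    exact sub_eq_zero.1 this
  have hTinj' : Function.Injective (T : (Fin n → ℂ) →ₗ[ℂ] (Fin n → ℂ)) := hTinj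
  have hTsurj : Function.Surjective (T : (Fin n → ℂ) →ₗ[ℂ] (Fin n → ℂ)) :=
    LinearMap.injective_iff_surjective.1 hTinj'
  set S : (Fin n → ℂ) ≃L[ℂ] (Fin n → ℂ) :=
    (LinearEquiv.ofBijective (T : (Fin n → ℂ) →ₗ[ℂ] (Fin n → ℂ))
      ⟨hTinj', hTsurj⟩).toContinuousLinearEquiv with hS
  have hSapp : ∀ v, S v = v - A v := by
    intro v
    have h1 : S v = (LinearEquiv.ofBijective (T : (Fin n → ℂ) →ₗ[ℂ] (Fin n → ℂ))
        ⟨hTinj', hTsurj⟩) v := by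
      rw [hS]
      rw [LinearEquiv.coe_toContinuousLinearEquiv']
    rw [h1]
    exact hTapp v
  set SS : (Fin n → ℂ) →L[ℂ] (Fin n → ℂ) := (↑S.symm : (Fin n → ℂ) →L[ℂ] (Fin n → ℂ)) with hSS
  have hSSapp : ∀ v, SS (S v) = v := fun v => S.symm_apply_apply v
  clear_value S SS
  set B' := L.comp (ContinuousLinearMap.inl ℂ (Fin m → ℂ) (Fin n → ℂ)) with hB'
  have hLsplit : ∀ (u : Fin m → ℂ) (v : Fin n → ℂ), L (u, v) = B' u + A v := by
    intro u v
    have hsplit : ((u, v) : (Fin m → ℂ) × (Fin n → ℂ))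
        = (u, 0) + (0, v) := by simp
    rw [hsplit, map_add, hB', hAdef]
    simp
  -- geometric data
  obtain ⟨s, hs0, hsY⟩ := Metric.isOpen_iff.1 hYopen y₀ hy₀
  obtain ⟨R, hR0, hRD⟩ := hDbdd.subset_ball_lt 0 p
  obtain ⟨δ₁, hδ₁0, hδ₁⟩ := hK₀.exists_thickening_subset_open hDopen hsub₀
  set M := 2 * R / s with hM
  have hM0 : 0 < M := by positivity
  have hunif : ∀ y ∈ ball y₀ s, ∀ z ∈ D, ‖F (y, z) - F (y₀, z)‖ ≤ M * ‖y - y₀‖ := by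
    intro y hy z hz
    have hud : DifferentiableOn ℂ (fun y' => F (y', z)) (ball y₀ s) := by
      have hpm : DifferentiableOn ℂ (fun y' : Fin m → ℂ => ((y', z) : _ × _)) (ball y₀ s) :=
        (differentiable_id.prodMk (differentiable_const z)).differentiableOn
      exact hF.comp hpm (fun y' hy' => ⟨hsY hy', hz⟩)
    have hmapsu : MapsTo (fun y' => F (y', z)) (ball y₀ s) (ball (F (y₀, z)) (2 * R)) := by
      intro y' hy'
      have h1 : F (y', z) ∈ D := hFmaps y' (hsY hy') z hz
      have h2 : F (y₀, z) ∈ D := hFmaps y₀ hy₀ z hz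
      have hb1 := hRD h1; have hb2 := hRD h2
      rw [mem_ball] at hb1 hb2 ⊢
      calc dist (F (y', z)) (F (y₀, z)) ≤ dist (F (y', z)) p + dist p (F (y₀, z)) :=
            dist_triangle _ _ _
        _ < R + R := by rw [dist_comm p]; linarith
        _ = 2 * R := by ring
    have := schwarz_dist hs0 hud hmapsu hy
    rw [hM]
    exact this
  -- almost-fixed points in a compact set are near p
  set K' := Metric.cthickening (δ₁ / 2) (closure (f₀ '' D)) with hK'
  have hK'cpt : IsCompact K' := hK₀.cthickening
  have hK'D : K' ⊆ D :=
    (Metric.cthickening_subset_thickening' hδ₁0 (by linarith) _).trans hδ₁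
  have hkey : ∀ ε > 0, ∃ η > 0, ∀ q ∈ K', ‖q - f₀ q‖ ≤ η → dist q p < ε := by
    intro ε hε
    by_contra hcon
    push_neg at hcon
    have hseq : ∀ j : ℕ, ∃ q, q ∈ K' ∧ ‖q - f₀ q‖ ≤ 1 / ((j : ℝ) + 1) ∧ ε ≤ dist q p := by
      intro j
      obtain ⟨q, hq1, hq2, hq3⟩ := hcon (1 / ((j : ℝ) + 1)) (by positivity)
      exact ⟨q, hq1, hq2, hq3⟩
    choose qs hqs1 hqs2 hqs3 using hseq
    obtain ⟨qlim, hqlimK, φ, hφmono, hφtend⟩ := hK'cpt.tendsto_subseq hqs1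
    have hqlimD : qlim ∈ D := hK'D hqlimK
    have hcontf : ContinuousAt f₀ qlim :=
      (hf₀d.differentiableAt (hDopen.mem_nhds hqlimD)).continuousAt
    have h1 : Tendsto (fun j => ‖qs (φ j) - f₀ (qs (φ j))‖) atTop (𝓝 ‖qlim - f₀ qlim‖) :=
      (hφtend.sub ((hcontf.tendsto).comp hφtend)).norm
    have h2 : Tendsto (fun j => 1 / ((φ j : ℝ) + 1)) atTop (𝓝 0) :=
      tendsto_one_div_add_atTop_nhds_zero_nat.comp hφmono.tendsto_atTop
    have hle0 : ‖qlim - f₀ qlim‖ ≤ 0 :=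
      le_of_tendsto_of_tendsto' h1 h2 (fun j => hqs2 (φ j))
    have hfixq : f₀ qlim = qlim := by
      have : qlim - f₀ qlim = 0 := by
        simpa using le_antisymm hle0 (norm_nonneg _)
      have := sub_eq_zero.1 this; exact this.symm
    have heq : qlim = p :=
      fixed_point_unique hDopen hDconn hDbdd hf₀d hK₀ hsub₀ hpD hf₀fix hqlimD hfixq
    have hdist : Tendsto (fun j => dist (qs (φ j)) p) atTop (𝓝 (dist qlim p)) :=
      hφtend.dist tendsto_const_nhds
    have hge : ε ≤ dist qlim p := ge_of_tendsto' hdist (fun j => hqs3 (φ j))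
    rw [heq, dist_self] at hge
    linarith
  -- continuity of τ at y₀
  have hcont : Tendsto τ (𝓝 y₀) (𝓝 p) := by
    rw [Metric.tendsto_nhds]
    intro ε hε
    obtain ⟨η, hη0, hηp⟩ := hkey ε hε
    set ρ := min s (min η (δ₁ / 2) / M) with hρ
    have hρ0 : 0 < ρ := lt_min hs0 (by positivity)
    filter_upwards [Metric.ball_mem_nhds y₀ hρ0] with y hy
    have hball : y ∈ ball y₀ s := ball_subset_ball (min_le_left _ _) hy
    have hyY : y ∈ Y := hsY hball
    have hyn : ‖y - y₀‖ < ρ := by rwa [mem_ball, dist_eq_norm] at hy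
    have hτD := hτmem y hyY
    have hτfx := hτfix y hyY
    have hMy : M * ‖y - y₀‖ ≤ min η (δ₁ / 2) := by
      have h1 : ‖y - y₀‖ ≤ min η (δ₁ / 2) / M :=
        le_of_lt (lt_of_lt_of_le hyn (min_le_right _ _))
      calc M * ‖y - y₀‖ ≤ M * (min η (δ₁ / 2) / M) :=
            mul_le_mul_of_nonneg_left h1 hM0.le
        _ = min η (δ₁ / 2) := by field_simp
    have hqfd : ‖τ y - f₀ (τ y)‖ ≤ min η (δ₁ / 2) := by
      have h1 := hunif y hball (τ y) hτD
      rw [hτfx] at h1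
      exact le_trans h1 hMy
    have hqK' : τ y ∈ K' := by
      apply Metric.mem_cthickening_of_dist_le (τ y) (f₀ (τ y)) _ _
        (subset_closure (mem_image_of_mem f₀ hτD))
      rw [dist_eq_norm]
      exact le_trans hqfd (min_le_right _ _)
    exact hηp (τ y) hqK' (le_trans hqfd (min_le_left _ _))
  -- differentiability via the little-o characterization
  set CS := ‖SS‖ with hCS
  set CB := ‖B'‖ with hCB
  have hCS0 : 0 ≤ CS := norm_nonneg _
  have hCB0 : 0 ≤ CB := norm_nonneg _
  have htd : Tendsto (fun y => ((y, τ y) : (Fin m → ℂ) × (Fin n → ℂ))) (𝓝 y₀) (𝓝 (y₀, p)) :=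
    tendsto_id.prodMk_nhds hcont
  set w : (Fin m → ℂ) → (Fin n → ℂ) :=
    fun y => τ y - p - (B' (y - y₀) + A (τ y - p)) with hw
  have hwapp : ∀ y, w y = τ y - p - (B' (y - y₀) + A (τ y - p)) := fun y => rfl
  have hkey2 : ∀ c > 0, ∀ᶠ y in 𝓝 y₀, ‖w y‖ ≤ c * max ‖y - y₀‖ ‖τ y - p‖ := by
    intro c hc
    have hlo := hL.isLittleO.def hc
    have hev := htd.eventually hlo
    filter_upwards [hev, hYopen.mem_nhds hy₀] with y h1 h2
    have hFy : F (y, τ y) = τ y := hτfix y h2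
    rw [show ((y, τ y) : (Fin m → ℂ) × (Fin n → ℂ)) - (y₀, p) = (y - y₀, τ y - p) from rfl,
      hLsplit, hFy, hpfix, Prod.norm_def] at h1
    exact h1
  have hSv : ∀ y, S (τ y - p) = B' (y - y₀) + w y := by
    intro y
    rw [hSapp, hwapp]
    abel
  have hvw : ∀ y, τ y - p = SS (B' (y - y₀) + w y) := by
    intro y
    rw [← hSv y, hSSapp]
  set C₄ := 2 * CS * CB + 1 with hC₄
  have hC₄0 : 0 < C₄ := by
    rw [hC₄]
    have := mul_nonneg hCS0 hCB0
    linarith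
  have hlip : ∀ᶠ y in 𝓝 y₀, ‖τ y - p‖ ≤ C₄ * ‖y - y₀‖ := by
    have hc₀ : (0:ℝ) < 1 / (2 * (CS + 1)) := by positivity
    filter_upwards [hkey2 _ hc₀] with y hy
    have h1 : ‖τ y - p‖ ≤ CS * CB * ‖y - y₀‖ + CS * ‖w y‖ := by
      rw [hvw y]
      calc ‖SS (B' (y - y₀) + w y)‖ ≤ CS * ‖B' (y - y₀) + w y‖ := SS.le_opNorm _
        _ ≤ CS * (CB * ‖y - y₀‖ + ‖w y‖) := by
            apply mul_le_mul_of_nonneg_left _ hCS0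
            exact le_trans (norm_add_le _ _) (add_le_add_left (B'.le_opNorm _) _)
        _ = CS * CB * ‖y - y₀‖ + CS * ‖w y‖ := by ring
    have h2 : ‖w y‖ ≤ 1 / (2 * (CS + 1)) * (‖y - y₀‖ + ‖τ y - p‖) :=
      le_trans hy (mul_le_mul_of_nonneg_left
        (max_le_add_of_nonneg (norm_nonneg _) (norm_nonneg _)) hc₀.le)
    have h3 : CS * ‖w y‖ ≤ 1 / 2 * (‖y - y₀‖ + ‖τ y - p‖) := by
      calc CS * ‖w y‖ ≤ CS * (1 / (2 * (CS + 1)) * (‖y - y₀‖ + ‖τ y - p‖)) :=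
            mul_le_mul_of_nonneg_left h2 hCS0
        _ = CS / (2 * (CS + 1)) * (‖y - y₀‖ + ‖τ y - p‖) := by ring
        _ ≤ 1 / 2 * (‖y - y₀‖ + ‖τ y - p‖) := by
            apply mul_le_mul_of_nonneg_right _ (by positivity)
            rw [div_le_div_iff₀ (by positivity) (by norm_num)]
            linarith
    have hexp : C₄ * ‖y - y₀‖ = 2 * (CS * CB * ‖y - y₀‖) + ‖y - y₀‖ := by
      rw [hC₄]; ring
    linarith [norm_nonneg (y - y₀), norm_nonneg (τ y - p)]
  have hder : HasFDerivAt τ (SS.comp B') y₀ := by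
    rw [hasFDerivAt_iff_isLittleO, isLittleO_iff]
    intro c hc
    have hb : (0:ℝ) < (CS + 1) * (C₄ + 1) :=
      mul_pos (by linarith) (by linarith)
    set c' := min (1 / (2 * (CS + 1))) (c / ((CS + 1) * (C₄ + 1))) with hc'
    have hc'0 : 0 < c' := lt_min (by positivity) (div_pos hc hb)
    filter_upwards [hkey2 c' hc'0, hlip] with y hy hlipy
    have hg1 : τ y - τ y₀ - (SS.comp B') (y - y₀) = SS (w y) := by
      rw [ContinuousLinearMap.comp_apply, ← hpdef, hvw y, ← map_sub SS]
      congr 1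
      abel
    rw [hg1]
    have hmax : max ‖y - y₀‖ ‖τ y - p‖ ≤ (C₄ + 1) * ‖y - y₀‖ := by
      have hCu : 0 ≤ C₄ * ‖y - y₀‖ := mul_nonneg hC₄0.le (norm_nonneg _)
      have hexp2 : (C₄ + 1) * ‖y - y₀‖ = C₄ * ‖y - y₀‖ + ‖y - y₀‖ := by ring
      apply max_le
      · linarith [norm_nonneg (y - y₀)]
      · linarith [norm_nonneg (y - y₀)]
    calc ‖SS (w y)‖ ≤ CS * ‖w y‖ := SS.le_opNorm _
      _ ≤ CS * (c' * max ‖y - y₀‖ ‖τ y - p‖) := mul_le_mul_of_nonneg_left hy hCS0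
      _ ≤ CS * (c' * ((C₄ + 1) * ‖y - y₀‖)) := by
          apply mul_le_mul_of_nonneg_left _ hCS0
          exact mul_le_mul_of_nonneg_left hmax hc'0.le
      _ = CS * (C₄ + 1) * c' * ‖y - y₀‖ := by ring
      _ ≤ c * ‖y - y₀‖ := by
          apply mul_le_mul_of_nonneg_right _ (norm_nonneg _)
          calc CS * (C₄ + 1) * c' ≤ CS * (C₄ + 1) * (c / ((CS + 1) * (C₄ + 1))) := by
                apply mul_le_mul_of_nonneg_left (min_le_right _ _)
                  (mul_nonneg hCS0 (by linarith))
            _ = c * (CS * (C₄ + 1) / ((CS + 1) * (C₄ + 1))) := by ring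
            _ ≤ c * 1 := by
                apply mul_le_mul_of_nonneg_left _ hc.le
                rw [div_le_one hb]
                exact mul_le_mul_of_nonneg_right (by linarith) (by linarith)
            _ = c := mul_one c
  exact hder.differentiableAt.differentiableWithinAt
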